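/- Let x* be a locally optimal solution of the problem (P) and suppose H is Fréchet differentiable at x*. Then ∂h₀(x*) ⊆ ∂g₀(x*) + N_{Ω(x*)}(x*), where Ω(x*) = {x ∈ A : G(x) − H(x*) − DH(x*)(x − x*) ⪯_K 0} and N_V(x) = {v ∈ ℝ^d : ⟨v, z − x⟩ ≤ 0 for all z ∈ V} denotes the normal cone to a convex set V at x ∈ V. -/
import Mathlib

open scoped RealInnerProductSpace Pointwise

/-- A function with values in a space ordered by a cone `K` is `K`-convex if
`Φ(αx₁ + (1−α)x₂) ⪯_K αΦ(x₁) + (1−α)Φ(x₂)` for all `x₁, x₂` and `α ∈ [0,1]`. -/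
def KConvex {X Y : Type*} [AddCommGroup X] [Module ℝ X] [AddCommGroup Y] [Module ℝ Y]
    (K : Set Y) (Φ : X → Y) : Prop :=
  ∀ (x₁ x₂ : X) (α : ℝ), α ∈ Set.Icc (0 : ℝ) 1 →
    α • Φ x₁ + (1 - α) • Φ x₂ - Φ (α • x₁ + (1 - α) • x₂) ∈ K

/-- The subdifferential of a convex function `φ : ℝ^d → ℝ` at a point `x`. -/
def subdiff {d : ℕ} (φ : EuclideanSpace ℝ (Fin d) → ℝ) (x : EuclideanSpace ℝ (Fin d)) :
    Set (EuclideanSpace ℝ (Fin d)) :=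
  {w | ∀ y, φ x + ⟪w, y - x⟫ ≤ φ y}

/-- Local abbreviation for Euclidean space. -/
abbrev Ed (d : ℕ) := EuclideanSpace ℝ (Fin d)

set_option maxHeartbeats 1000000 in
theorem stmt_11 {d : ℕ} {Y : Type*}
    [NormedAddCommGroup Y] [NormedSpace ℝ Y] [CompleteSpace Y]
    (K : Set Y) (hKclosed : IsClosed K) (hKconvex : Convex ℝ K)
    (hKcone : ∀ c : ℝ, 0 ≤ c → ∀ y ∈ K, c • y ∈ K)
    (hKpointed : K ∩ (-K) = {0})
    (g₀ h₀ : EuclideanSpace ℝ (Fin d) → ℝ)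
    (hg₀ : ConvexOn ℝ Set.univ g₀) (hh₀ : ConvexOn ℝ Set.univ h₀)
    (G H : EuclideanSpace ℝ (Fin d) → Y)
    (hG : KConvex K G) (hH : KConvex K H)
    (A : Set (EuclideanSpace ℝ (Fin d))) (hAclosed : IsClosed A) (hAconvex : Convex ℝ A)
    (xs : EuclideanSpace ℝ (Fin d))
    (DH : EuclideanSpace ℝ (Fin d) →L[ℝ] Y) (hDH : HasFDerivAt H DH xs)
    (hxsfeas : xs ∈ A ∧ -(G xs - H xs) ∈ K)
    (hlocopt : ∃ U ∈ nhds xs, ∀ x ∈ U, x ∈ A → -(G x - H x) ∈ K →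
      g₀ xs - h₀ xs ≤ g₀ x - h₀ x) :
    subdiff h₀ xs ⊆ subdiff g₀ xs +
      {w : EuclideanSpace ℝ (Fin d) |
        ∀ z ∈ {x | x ∈ A ∧ -(G x - H xs - DH (x - xs)) ∈ K}, ⟪w, z - xs⟫ ≤ 0} := by
  classical
  intro v hv
  -- K is closed under addition
  have hKadd : ∀ a ∈ K, ∀ b ∈ K, a + b ∈ K := by
    intro a ha b hb
    have h1 : (1/2 : ℝ) • a + (1/2 : ℝ) • b ∈ K :=
      hKconvex ha hb (by norm_num) (by norm_num) (by norm_num)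
    have h2 := hKcone 2 (by norm_num) _ h1
    have : (2 : ℝ) • ((1/2 : ℝ) • a + (1/2 : ℝ) • b) = a + b := by
      rw [smul_add, smul_smul, smul_smul]; norm_num
    rwa [this] at h2
  -- the gradient inequality for the K-convex function H
  have hgrad : ∀ x : Ed d, H x - H xs - DH (x - xs) ∈ K := by
    intro x
    set u : Ed d := x - xs with hu
    have hline : HasDerivAt (fun t : ℝ => xs + t • u) u 0 := by
      simpa using ((hasDerivAt_id (0 : ℝ)).smul_const u).const_add xs
    have hd : HasDerivAt (fun t : ℝ => H (xs + t • u)) (DH u) 0 := by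
      have hDH' : HasFDerivAt H DH (xs + (0 : ℝ) • u) := by simpa using hDH
      exact hDH'.comp_hasDerivAt (0 : ℝ) hline
    have hslope := hasDerivAt_iff_tendsto_slope_zero.mp hd
    -- restrict to positive t
    have hmono : nhdsWithin (0 : ℝ) (Set.Ioi 0) ≤ nhdsWithin (0 : ℝ) {(0 : ℝ)}ᶜ :=
      nhdsWithin_mono _ (fun t ht => ne_of_gt ht)
    have hslope' : Filter.Tendsto
        (fun t : ℝ => (H x - H xs) - t⁻¹ • (H (xs + (0 + t) • u) - H (xs + (0:ℝ) • u)))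
        (nhdsWithin (0 : ℝ) (Set.Ioi 0)) (nhds ((H x - H xs) - DH u)) :=
      Filter.Tendsto.const_sub _ (hslope.mono_left hmono)
    have hmem : ∀ᶠ t in nhdsWithin (0 : ℝ) (Set.Ioi 0),
        (H x - H xs) - t⁻¹ • (H (xs + (0 + t) • u) - H (xs + (0:ℝ) • u)) ∈ K := by
      filter_upwards [Ioc_mem_nhdsGT_of_mem (Set.left_mem_Ico.mpr zero_lt_one)] with t ht
      have htpos : (0 : ℝ) < t := ht.1
      have hKc := hH x xs t ⟨le_of_lt htpos, ht.2⟩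
      have hKc' := hKcone t⁻¹ (le_of_lt (inv_pos.mpr htpos)) _ hKc
      have heq : t⁻¹ • (t • H x + (1 - t) • H xs - H (t • x + (1 - t) • xs)) =
          (H x - H xs) - t⁻¹ • (H (xs + (0 + t) • u) - H (xs + (0:ℝ) • u)) := by
        have hpt : t • x + (1 - t) • xs = xs + (0 + t) • u := by
          rw [hu]; module
        rw [hpt]
        have h0 : xs + (0 : ℝ) • u = xs := by simp
        rw [h0]
        match_scalars <;> (field_simp; try ring)
      rwa [heq] at hKc'
    exact hKclosed.mem_of_tendsto hslope' hmem
  -- the linearized feasible set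
  set Ω : Set (Ed d) := {x | x ∈ A ∧ -(G x - H xs - DH (x - xs)) ∈ K} with hΩdef
  have hxsΩ : xs ∈ Ω := by
    constructor
    · exact hxsfeas.1
    · simpa using hxsfeas.2
  have hΩfeas : ∀ z ∈ Ω, -(G z - H z) ∈ K := by
    intro z hz
    have h1 := hKadd _ hz.2 _ (hgrad z)
    have : -(G z - H xs - DH (z - xs)) + (H z - H xs - DH (z - xs)) = -(G z - H z) := by
      abel
    rwa [this] at h1
  have hΩconv : Convex ℝ Ω := by
    intro z₁ hz₁ z₂ hz₂ a b ha hb hab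
    obtain rfl : b = 1 - a := by linarith
    constructor
    · exact hAconvex hz₁.1 hz₂.1 ha hb hab
    · have hmix : a • -(G z₁ - H xs - DH (z₁ - xs)) + (1 - a) • -(G z₂ - H xs - DH (z₂ - xs)) ∈ K :=
        hKconvex hz₁.2 hz₂.2 ha hb hab
      have hdef : a • G z₁ + (1 - a) • G z₂ - G (a • z₁ + (1 - a) • z₂) ∈ K :=
        hG z₁ z₂ a ⟨ha, by linarith⟩
      have h1 := hKadd _ hmix _ hdef
      have heq : a • -(G z₁ - H xs - DH (z₁ - xs)) + (1 - a) • -(G z₂ - H xs - DH (z₂ - xs)) +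
          (a • G z₁ + (1 - a) • G z₂ - G (a • z₁ + (1 - a) • z₂)) =
          -(G (a • z₁ + (1 - a) • z₂) - H xs - DH (a • z₁ + (1 - a) • z₂ - xs)) := by
        have hDHeq : DH (a • z₁ + (1 - a) • z₂ - xs) =
            a • DH (z₁ - xs) + (1 - a) • DH (z₂ - xs) := by
          rw [← map_smul, ← map_smul, ← map_add]
          congr 1
          module
        rw [hDHeq]
        module
      rwa [heq] at h1
  -- xs minimizes g₀ x - ⟪v, x - xs⟫ over Ω
  have hmin : ∀ z ∈ Ω, g₀ xs ≤ g₀ z - ⟪v, z - xs⟫ := by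
    obtain ⟨U, hU, hopt⟩ := hlocopt
    intro z hz
    have hcont : Filter.Tendsto (fun α : ℝ => xs + α • (z - xs))
        (nhdsWithin (0 : ℝ) (Set.Ioi 0)) (nhds xs) := by
      have : Filter.Tendsto (fun α : ℝ => xs + α • (z - xs)) (nhds 0) (nhds xs) := by
        have hc : Continuous (fun α : ℝ => xs + α • (z - xs)) :=
          continuous_const.add (continuous_id.smul continuous_const)
        have := hc.tendsto 0
        simpa using this
      exact this.mono_left nhdsWithin_le_nhds
    have hevU : ∀ᶠ α in nhdsWithin (0 : ℝ) (Set.Ioi 0), xs + α • (z - xs) ∈ U :=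
      hcont.eventually_mem hU
    have hevI : ∀ᶠ α in nhdsWithin (0 : ℝ) (Set.Ioi 0), α ∈ Set.Ioc (0:ℝ) 1 :=
      Ioc_mem_nhdsGT_of_mem (Set.left_mem_Ico.mpr zero_lt_one)
    obtain ⟨α, hαU, hαI⟩ := (hevU.and hevI).exists
    set c : Ed d := xs + α • (z - xs) with hc
    have hcΩ : c ∈ Ω := by
      have := hΩconv (a := α) (b := 1 - α) hz hxsΩ (le_of_lt hαI.1)
        (by linarith [hαI.2]) (by ring)
      have heq : α • z + (1 - α) • xs = c := by rw [hc]; module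
      rwa [heq] at this
    have hfeas := hΩfeas c hcΩ
    have hloc := hopt c hαU hcΩ.1 hfeas
    have hsub := hv c
    have hinner : ⟪v, c - xs⟫ = α * ⟪v, z - xs⟫ := by
      have : c - xs = α • (z - xs) := by rw [hc]; abel
      rw [this, real_inner_smul_right]
    have hgconv : g₀ c ≤ α * g₀ z + (1 - α) * g₀ xs := by
      have ha1 : (0:ℝ) ≤ α := le_of_lt hαI.1
      have ha2 : (0:ℝ) ≤ 1 - α := by linarith [hαI.2]
      have ha3 : α + (1 - α) = 1 := by ring
      have := hg₀.2 (Set.mem_univ z) (Set.mem_univ xs) ha1 ha2 ha3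
      have heq : α • z + (1 - α) • xs = c := by rw [hc]; module
      rw [heq] at this
      simpa using this
    have hα : (0 : ℝ) < α := hαI.1
    nlinarith [hloc, hsub, hgconv]
  -- separation setup
  set ψ : Ed d → ℝ := fun x => g₀ x - g₀ xs - ⟪v, x - xs⟫ with hψdef
  have hψxs : ψ xs = 0 := by simp [hψdef]
  have hψcont : Continuous ψ := by
    have hg : Continuous g₀ := by
      have := hg₀.continuousOn isOpen_univ
      exact continuousOn_univ.mp this
    exact (hg.sub continuous_const).sub
      ((continuous_const.inner (continuous_id.sub continuous_const)))
  have hψconv : ∀ (x₁ x₂ : Ed d) (a b : ℝ), 0 ≤ a → 0 ≤ b → a + b = 1 →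
      ψ (a • x₁ + b • x₂) ≤ a * ψ x₁ + b * ψ x₂ := by
    intro x₁ x₂ a b ha hb hab
    have hg := hg₀.2 (Set.mem_univ x₁) (Set.mem_univ x₂) ha hb hab
    have hinner : ⟪v, a • x₁ + b • x₂ - xs⟫ = a * ⟪v, x₁ - xs⟫ + b * ⟪v, x₂ - xs⟫ := by
      have heq : a • x₁ + b • x₂ - xs = a • (x₁ - xs) + b • (x₂ - xs) := by
        calc a • x₁ + b • x₂ - xs = a • x₁ + b • x₂ - (a • xs + b • xs) := by
              rw [Convex.combo_self hab]
          _ = a • (x₁ - xs) + b • (x₂ - xs) := by module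
      rw [heq, inner_add_right, real_inner_smul_right, real_inner_smul_right]
    have hgxs : a * g₀ xs + b * g₀ xs = g₀ xs := by rw [← add_mul, hab, one_mul]
    simp only [hψdef, smul_eq_mul] at *
    linarith [hg, hinner, hgxs]
  set C₁ : Set (Ed d × ℝ) := {p | ψ p.1 < p.2} with hC₁def
  set C₂ : Set (Ed d × ℝ) := Ω ×ˢ Set.Iic (0 : ℝ) with hC₂def
  have hC₁open : IsOpen C₁ := isOpen_lt (hψcont.comp continuous_fst) continuous_snd
  have hC₁conv : Convex ℝ C₁ := by
    intro p hp q hq a b ha hb hab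
    simp only [hC₁def, Set.mem_setOf_eq] at *
    have h := hψconv p.1 q.1 a b ha hb hab
    have : a * ψ p.1 + b * ψ q.1 < a * p.2 + b * q.2 := by
      rcases eq_or_lt_of_le ha with h0 | h0
      · have hb1 : b = 1 := by linarith
        simp [← h0, hb1]; linarith [hq]
      · nlinarith [mul_le_mul_of_nonneg_left hq.le hb, mul_lt_mul_of_pos_left hp h0]
    calc ψ (a • p.1 + b • q.1) ≤ a * ψ p.1 + b * ψ q.1 := h
      _ < a * p.2 + b * q.2 := this
  have hC₂conv : Convex ℝ C₂ := hΩconv.prod (convex_Iic 0)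
  have hdisj : Disjoint C₁ C₂ := by
    rw [Set.disjoint_left]
    rintro ⟨x, t⟩ h1 h2
    simp only [hC₁def, Set.mem_setOf_eq] at h1
    rw [hC₂def, Set.mem_prod] at h2
    have := hmin x h2.1
    have ht : t ≤ 0 := h2.2
    simp only [hψdef] at h1
    linarith
  obtain ⟨f, u, hf₁, hf₂⟩ := geometric_hahn_banach_open hC₁conv hC₁open hC₂conv hdisj
  set β : ℝ := f ((0 : Ed d), (1 : ℝ)) with hβdef
  have hsplit : ∀ (x : Ed d) (t : ℝ), f (x, t) = f (x, 0) + t * β := by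
    intro x t
    have heq : ((x, t) : Ed d × ℝ) = (x, 0) + t • ((0 : Ed d), (1 : ℝ)) := by
      simp [Prod.ext_iff]
    rw [heq, map_add, map_smul, smul_eq_mul]
  have hβneg : β < 0 := by
    have h1 : f (xs, 1) < u := hf₁ (xs, 1) (by simp [hC₁def, hψxs])
    have h2 : u ≤ f (xs, 0) := hf₂ (xs, 0) (by simp [hC₂def, Set.mem_prod]; exact hxsΩ)
    rw [hsplit xs 1] at h1
    linarith
  have hkey1 : ∀ x : Ed d, f (x, 0) + ψ x * β ≤ u := by
    intro x
    by_contra hcon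
    push_neg at hcon
    set ε : ℝ := (f (x, 0) + ψ x * β - u) / (-β) with hεdef
    have hεpos : 0 < ε := div_pos (by linarith) (by linarith)
    have hmem : ((x, ψ x + ε) : Ed d × ℝ) ∈ C₁ := by
      simp only [hC₁def, Set.mem_setOf_eq]; linarith
    have h1 := hf₁ _ hmem
    rw [hsplit] at h1
    have hβne' : β ≠ 0 := by linarith
    have hεβ : ε * β = -(f (x, 0) + ψ x * β - u) := by
      rw [hεdef, div_mul_eq_mul_div, mul_div_assoc]
      have h2 : β / -β = -1 := by rw [div_neg, div_self hβne']
      rw [h2]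
      ring
    have hexp : (ψ x + ε) * β = ψ x * β + ε * β := by ring
    linarith [h1, hεβ, hexp]
  have hkey2 : ∀ z ∈ Ω, u ≤ f (z, 0) := by
    intro z hz
    exact hf₂ (z, 0) (Set.mem_prod.mpr ⟨hz, Set.mem_Iic.mpr le_rfl⟩)
  have huval : u = f (xs, 0) := by
    have h1 := hkey1 xs
    rw [hψxs] at h1
    have h2 := hkey2 xs hxsΩ
    linarith
  -- Riesz representation of x ↦ f (x, 0)
  set q : Ed d := (InnerProductSpace.toDual ℝ (Ed d)).symm (f.comp (ContinuousLinearMap.inl ℝ (Ed d) ℝ))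
    with hqdef
  have hq : ∀ x : Ed d, ⟪q, x⟫ = f (x, 0) := by
    intro x
    rw [hqdef, InnerProductSpace.toDual_symm_apply]
    simp
  set p : Ed d := (-β)⁻¹ • q with hpdef
  have hβne : (-β) ≠ 0 := by linarith
  have hp : ∀ x : Ed d, ⟪p, x⟫ = (-β)⁻¹ * f (x, 0) := by
    intro x
    rw [hpdef, real_inner_smul_left, hq]
  have hpdiff : ∀ x : Ed d, ⟪p, x - xs⟫ = (-β)⁻¹ * (f (x, 0) - f (xs, 0)) := by
    intro x
    have : ⟪p, x - xs⟫ = ⟪p, x⟫ - ⟪p, xs⟫ := inner_sub_right p x xs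
    rw [this, hp, hp]; ring
  -- the subgradient part
  have hu₀ : v + p ∈ subdiff g₀ xs := by
    intro y
    have h1 := hkey1 y
    rw [huval] at h1
    -- f(y,0) - f(xs,0) ≤ ψ y * (-β)
    have h2 : f (y, 0) - f (xs, 0) ≤ ψ y * (-β) := by linarith
    have h3 : ⟪p, y - xs⟫ ≤ ψ y := by
      rw [hpdiff]
      have h4 : (-β)⁻¹ * (f (y, 0) - f (xs, 0)) ≤ (-β)⁻¹ * (ψ y * (-β)) :=
        mul_le_mul_of_nonneg_left h2 (le_of_lt (inv_pos.mpr (by linarith)))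
      have h5 : (-β)⁻¹ * (ψ y * (-β)) = ψ y := by
        rw [mul_comm ((-β)⁻¹) _, mul_assoc, mul_inv_cancel₀ hβne, mul_one]
      linarith
    have hinner : ⟪v + p, y - xs⟫ = ⟪v, y - xs⟫ + ⟪p, y - xs⟫ := inner_add_left _ _ _
    simp only [hψdef] at h3
    rw [hinner]
    linarith
  -- the normal cone part
  have hw : ∀ z ∈ Ω, ⟪-p, z - xs⟫ ≤ 0 := by
    intro z hz
    have h1 := hkey2 z hz
    rw [huval] at h1
    have h2 : 0 ≤ ⟪p, z - xs⟫ := by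
      rw [hpdiff]
      have : 0 ≤ (-β)⁻¹ := le_of_lt (inv_pos.mpr (by linarith))
      nlinarith
    rw [inner_neg_left]
    linarith
  exact Set.mem_add.mpr ⟨v + p, hu₀, -p, hw, by abel⟩
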